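/- Let q ≥ 1 and a be natural numbers with a ≤ q, and let g_c : ℝ → ℝ → ℝ be a kernel, continuous on the triangular domain D_T := {(t,τ) : 0 ≤ t ≤ T, 0 ≤ τ ≤ t} for every T > 0, with g_c(t,τ) ≥ 0 for all 0 ≤ τ ≤ t. Assume: (i) there exists M₁ ≥ 0 with ∫₀^(min(t,1)) g_c(t,τ) dτ ≤ M₁ for all t ≥ 0, and (ii) there exists M₂ ≥ 0 with ∫₀ᵗ g_c(t,τ)·τ^q dτ ≤ M₂ for all t ≥ 0. Then there exists M ≥ 0 such that ∫₀ᵗ g_c(t,τ)·τ^a dτ ≤ M for all t ≥ 0. (Paper's Lemma 5(b).) -/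

import Mathlib

open intervalIntegral Set

/-- A kernel `g : ℝ → ℝ → ℝ` is continuous on the triangular domain
`D_T = {(t,τ) : 0 ≤ t ≤ T, 0 ≤ τ ≤ t}` for every `T > 0`. -/
def ContinuousOnTriangles (g : ℝ → ℝ → ℝ) : Prop :=
  ∀ T : ℝ, 0 < T →
    ContinuousOn (fun p : ℝ × ℝ => g p.1 p.2)
      {p : ℝ × ℝ | 0 ≤ p.1 ∧ p.1 ≤ T ∧ 0 ≤ p.2 ∧ p.2 ≤ p.1}

/-- **Paper's Lemma 5(b).** If `g_c ≥ 0` on the triangle, `∫₀^(min(t,1)) g_c(t,τ) dτ`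
and `∫₀ᵗ g_c(t,τ) τ^q dτ` are uniformly bounded, then for any `a ≤ q` the integral
`∫₀ᵗ g_c(t,τ) τ^a dτ` is uniformly bounded. -/
theorem lower_moment_integral_bounded
    (q a : ℕ) (hq : 1 ≤ q) (haq : a ≤ q)
    (g_c : ℝ → ℝ → ℝ)
    (hgc_cont : ContinuousOnTriangles g_c)
    (hnonneg : ∀ t τ : ℝ, 0 ≤ τ → τ ≤ t → 0 ≤ g_c t τ)
    (M₁ : ℝ) (hM₁ : 0 ≤ M₁)
    (hbound₁ : ∀ t : ℝ, 0 ≤ t → (∫ τ in (0:ℝ)..(min t 1), g_c t τ) ≤ M₁)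
    (M₂ : ℝ) (hM₂ : 0 ≤ M₂)
    (hbound₂ : ∀ t : ℝ, 0 ≤ t → (∫ τ in (0:ℝ)..t, g_c t τ * τ ^ q) ≤ M₂) :
    ∃ M : ℝ, 0 ≤ M ∧ ∀ t : ℝ, 0 ≤ t →
      (∫ τ in (0:ℝ)..t, g_c t τ * τ ^ a) ≤ M := by
  refine ⟨M₁ + M₂, by linarith, fun t ht => ?_⟩
  set m : ℝ := min t 1 with hm
  have hm0 : 0 ≤ m := le_min ht zero_le_one
  have hmt : m ≤ t := min_le_left _ _
  have hm1 : m ≤ 1 := min_le_right _ _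
  -- continuity of g_c t on [0, t]
  have hT : (0:ℝ) < max t 1 := lt_of_lt_of_le one_pos (le_max_right _ _)
  have hc : ContinuousOn (fun τ => g_c t τ) (Icc 0 t) := by
    have := hgc_cont (max t 1) hT
    have hcomp : ContinuousOn (fun τ : ℝ => (t, τ))
        (Icc 0 t) := (Continuous.prodMk_right t).continuousOn
    refine this.comp hcomp fun τ hτ => ?_
    exact ⟨ht, le_max_left _ _, hτ.1, hτ.2⟩
  have hint : ∀ n : ℕ, ∀ c d : ℝ, c ∈ Icc 0 t → d ∈ Icc 0 t →
      IntervalIntegrable (fun τ => g_c t τ * τ ^ n) MeasureTheory.volume c d := by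
    intro n c d hc' hd'
    apply ContinuousOn.intervalIntegrable
    apply ContinuousOn.mul
    · apply hc.mono
      have : uIcc c d ⊆ uIcc 0 t :=
        uIcc_subset_uIcc (by rw [uIcc_of_le ht]; exact hc') (by rw [uIcc_of_le ht]; exact hd')
      rwa [uIcc_of_le ht] at this
    · exact (continuous_pow n).continuousOn
  have h0 : (0:ℝ) ∈ Icc 0 t := ⟨le_refl _, ht⟩
  have hmI : m ∈ Icc 0 t := ⟨hm0, hmt⟩
  have htI : t ∈ Icc 0 t := ⟨ht, le_refl _⟩
  -- split
  have hsplit : (∫ τ in (0:ℝ)..t, g_c t τ * τ ^ a)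
      = (∫ τ in (0:ℝ)..m, g_c t τ * τ ^ a) + ∫ τ in m..t, g_c t τ * τ ^ a := by
    rw [integral_add_adjacent_intervals (hint a 0 m h0 hmI) (hint a m t hmI htI)]
  rw [hsplit]
  have hg_nn : ∀ τ ∈ Icc (0:ℝ) t, 0 ≤ g_c t τ := fun τ hτ => hnonneg t τ hτ.1 hτ.2
  -- first piece ≤ M₁
  have h1 : (∫ τ in (0:ℝ)..m, g_c t τ * τ ^ a) ≤ M₁ := by
    have hle : (∫ τ in (0:ℝ)..m, g_c t τ * τ ^ a) ≤ ∫ τ in (0:ℝ)..m, g_c t τ := by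
      apply intervalIntegral.integral_mono_on hm0 (hint a 0 m h0 hmI)
        ((hint 0 0 m h0 hmI).congr ?_)
      · intro τ hτ
        have hτ1 : τ ≤ 1 := le_trans hτ.2 hm1
        have hg := hnonneg t τ hτ.1 (le_trans hτ.2 hmt)
        calc g_c t τ * τ ^ a ≤ g_c t τ * 1 := by
              apply mul_le_mul_of_nonneg_left _ hg
              exact pow_le_one₀ hτ.1 hτ1
          _ = g_c t τ := mul_one _
      · intro τ _; simp
    exact le_trans hle (hbound₁ t ht)
  -- second piece ≤ M₂
  have h2 : (∫ τ in m..t, g_c t τ * τ ^ a) ≤ M₂ := by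
    rcases le_or_gt t 1 with hcase | hcase
    · have hmeq : m = t := min_eq_left hcase
      rw [hmeq, intervalIntegral.integral_same]
      exact hM₂
    have hle : (∫ τ in m..t, g_c t τ * τ ^ a) ≤ ∫ τ in m..t, g_c t τ * τ ^ q := by
      apply intervalIntegral.integral_mono_on hmt (hint a m t hmI htI) (hint q m t hmI htI)
      intro τ hτ
      have hm1' : m = 1 := min_eq_right hcase.le
      have hτ1 : 1 ≤ τ := hm1' ▸ hτ.1
      have hg := hnonneg t τ (by linarith) hτ.2
      exact mul_le_mul_of_nonneg_left (pow_le_pow_right₀ hτ1 haq) hg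
    have hle2 : (∫ τ in m..t, g_c t τ * τ ^ q) ≤ ∫ τ in (0:ℝ)..t, g_c t τ * τ ^ q := by
      have hsplit2 : (∫ τ in (0:ℝ)..t, g_c t τ * τ ^ q)
          = (∫ τ in (0:ℝ)..m, g_c t τ * τ ^ q) + ∫ τ in m..t, g_c t τ * τ ^ q := by
        rw [integral_add_adjacent_intervals (hint q 0 m h0 hmI) (hint q m t hmI htI)]
      have hpos : 0 ≤ ∫ τ in (0:ℝ)..m, g_c t τ * τ ^ q := by
        apply intervalIntegral.integral_nonneg hm0
        intro τ hτ
        exact mul_nonneg (hnonneg t τ hτ.1 (le_trans hτ.2 hmt)) (pow_nonneg hτ.1 q)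
      linarith [hsplit2]
    exact le_trans (le_trans hle hle2) (hbound₂ t ht)
  linarith
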